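/- arXiv:2106.05232 — 6 statements merged into one kernel-verified Lean document; each statement's English description precedes it below -/
import Mathlib

section
/- For α ∈ (0,1) ∪ (1,∞), the function f_α(u) = (α/(α-1))·((1 + u^α)^(1/α) − (1+u) − 2^(1/α) + 2) defined for u ≥ 0 is convex. -/
open Real Set

lemma arimoto_hasDerivAt (α : ℝ) (hα0 : 0 < α) {u : ℝ} (hu : 0 < u) :
    HasDerivAt (fun u : ℝ => α / (α - 1) * ((1 + u ^ α) ^ (1 / α) - (1 + u) - 2 ^ (1 / α) + 2))
      (α / (α - 1) * ((1 + u ^ (-α)) ^ ((1 - α) / α) - 1)) u := by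
  have h1 : HasDerivAt (fun u : ℝ => u ^ α) (α * u ^ (α - 1)) u := by
    simpa [mul_comm] using Real.hasDerivAt_rpow_const (p := α) (Or.inl hu.ne')
  have h2 : HasDerivAt (fun u : ℝ => 1 + u ^ α) (α * u ^ (α - 1)) u := by
    exact h1.const_add 1
  have hpos : 0 < 1 + u ^ α := by positivity
  have h3 : HasDerivAt (fun u : ℝ => (1 + u ^ α) ^ (1 / α))
      (α * u ^ (α - 1) * (1 / α) * (1 + u ^ α) ^ (1 / α - 1)) u := by
    exact h2.rpow_const (p := 1 / α) (Or.inl hpos.ne')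
  have h4 : HasDerivAt (fun u : ℝ => (1 + u ^ α) ^ (1 / α) - (1 + u) - 2 ^ (1 / α) + 2)
      (α * u ^ (α - 1) * (1 / α) * (1 + u ^ α) ^ (1 / α - 1) - 1) u := by
    exact ((h3.sub ((hasDerivAt_id u).const_add 1)).sub_const
      ((2:ℝ) ^ (1 / α))).add_const (2:ℝ)
  have h5 := h4.const_mul (α / (α - 1))
  refine h5.congr_deriv ?_
  have hua : 0 < u ^ α := Real.rpow_pos_of_pos hu α
  have key : α * u ^ (α - 1) * (1 / α) * (1 + u ^ α) ^ (1 / α - 1)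
      = (1 + u ^ (-α)) ^ ((1 - α) / α) := by
    have hb : (1 : ℝ) + u ^ (-α) = (1 + u ^ α) / u ^ α := by
      rw [Real.rpow_neg hu.le]
      field_simp
      ring
    have he : 1 / α - 1 = (1 - α) / α := by field_simp
    have hpow : (u ^ α) ^ ((1 - α) / α) = u ^ (1 - α) := by
      rw [← Real.rpow_mul hu.le]
      congr 1
      field_simp
    rw [hb, Real.div_rpow hpos.le hua.le, hpow, he]
    rw [eq_div_iff (Real.rpow_pos_of_pos hu (1 - α)).ne']
    have huu : u ^ (α - 1) * u ^ (1 - α) = 1 := by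
      rw [← Real.rpow_add hu]; norm_num
    have hinv : α * (1 / α) = 1 := by field_simp
    linear_combination (α * (1 / α) * (1 + u ^ α) ^ ((1 - α) / α)) * huu +
      ((1 + u ^ α) ^ ((1 - α) / α)) * hinv
  rw [key]

theorem arimoto_generator_convex (α : ℝ) (hα : α ∈ Set.Ioo (0:ℝ) 1 ∪ Set.Ioi 1) :
    ConvexOn ℝ (Set.Ici (0:ℝ))
      (fun u : ℝ => α / (α - 1) * ((1 + u ^ α) ^ (1 / α) - (1 + u) - 2 ^ (1 / α) + 2)) := by
  have hα0 : 0 < α := by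
    rcases hα with h | h
    · exact h.1
    · linarith [mem_Ioi.mp h]
  set f : ℝ → ℝ :=
    fun u : ℝ => α / (α - 1) * ((1 + u ^ α) ^ (1 / α) - (1 + u) - 2 ^ (1 / α) + 2) with hf
  have hcont : ContinuousOn f (Set.Ici (0:ℝ)) := by
    have h1 : ContinuousOn (fun u : ℝ => u ^ α) (Set.Ici (0:ℝ)) := fun x _ =>
      (Real.continuousAt_rpow_const x α (Or.inr hα0.le)).continuousWithinAt
    have h2 : ContinuousOn (fun u : ℝ => (1 + u ^ α) ^ (1 / α)) (Set.Ici (0:ℝ)) := by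
      apply ContinuousOn.rpow_const (by fun_prop)
      intro x hx
      have : (0:ℝ) ≤ x ^ α := Real.rpow_nonneg hx α
      left; positivity
    fun_prop
  have hderiv : ∀ u ∈ Set.Ioi (0:ℝ),
      deriv f u = α / (α - 1) * ((1 + u ^ (-α)) ^ ((1 - α) / α) - 1) := fun u hu =>
    (arimoto_hasDerivAt α hα0 hu).deriv
  have hdiff : DifferentiableOn ℝ f (interior (Set.Ici (0:ℝ))) := by
    rw [interior_Ici]
    exact fun u hu => (arimoto_hasDerivAt α hα0 hu).differentiableAt.differentiableWithinAt
  have hmono : MonotoneOn (deriv f) (interior (Set.Ici (0:ℝ))) := by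
    rw [interior_Ici]
    intro x hx y hy hxy
    rw [hderiv x hx, hderiv y hy]
    have hx0 : (0:ℝ) < x := hx
    have hy0 : (0:ℝ) < y := hy
    have hbase : 1 + y ^ (-α) ≤ 1 + x ^ (-α) := by
      have : y ^ (-α) ≤ x ^ (-α) :=
        Real.rpow_le_rpow_of_nonpos hx0 hxy (by linarith)
      linarith
    have hbx : (0:ℝ) < 1 + x ^ (-α) := by positivity
    have hby : (0:ℝ) < 1 + y ^ (-α) := by positivity
    rcases hα with h | h
    · -- 0 < α < 1 : exponent positive, coefficient negative
      have hc : α / (α - 1) ≤ 0 := by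
        apply div_nonpos_of_nonneg_of_nonpos <;> [linarith [h.1]; linarith [h.2]]
      have hexp : (0:ℝ) ≤ (1 - α) / α := by
        apply div_nonneg <;> linarith [h.1, h.2]
      have hp : (1 + y ^ (-α)) ^ ((1 - α) / α) ≤ (1 + x ^ (-α)) ^ ((1 - α) / α) :=
        Real.rpow_le_rpow hby.le hbase hexp
      have := mul_le_mul_of_nonpos_left (by linarith : (1 + y ^ (-α)) ^ ((1 - α) / α) - 1
          ≤ (1 + x ^ (-α)) ^ ((1 - α) / α) - 1) hc
      linarith
    · -- α > 1 : exponent negative, coefficient positive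
      have h1 : (1:ℝ) < α := mem_Ioi.mp h
      have hc : 0 ≤ α / (α - 1) := div_nonneg (by linarith) (by linarith)
      have hexp : (1 - α) / α ≤ 0 :=
        div_nonpos_of_nonpos_of_nonneg (by linarith) hα0.le
      have hp : (1 + x ^ (-α)) ^ ((1 - α) / α) ≤ (1 + y ^ (-α)) ^ ((1 - α) / α) :=
        Real.rpow_le_rpow_of_nonpos hby hbase hexp
      have := mul_le_mul_of_nonneg_left (by linarith : (1 + x ^ (-α)) ^ ((1 - α) / α) - 1
          ≤ (1 + y ^ (-α)) ^ ((1 - α) / α) - 1) hc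
      linarith
  exact hmono.convexOn_of_deriv (convex_Ici 0) hcont hdiff
end

section
/- For a, b > 0, the limit as α → 1 of (α/(α-1))·((a^α + b^α)^(1/α) − 2^(1/α − 1)·(a+b)) equals a·log(a/((a+b)/2)) + b·log(b/((a+b)/2)). -/
open Real Set Filter

theorem arimoto_limit_alpha_one (a b : ℝ) (ha : 0 < a) (hb : 0 < b) :
    Filter.Tendsto
      (fun α : ℝ => α / (α - 1) * ((a ^ α + b ^ α) ^ (1 / α) - 2 ^ (1 / α - 1) * (a + b)))
      (nhdsWithin 1 (Set.Ioo (0:ℝ) 1 ∪ Set.Ioi 1))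
      (nhds (a * Real.log (a / ((a + b) / 2)) + b * Real.log (b / ((a + b) / 2)))) := by
  have hab : (0:ℝ) < a + b := by linarith
  set F : ℝ → ℝ := fun α => (a ^ α + b ^ α) ^ (1 / α) - 2 ^ (1 / α - 1) * (a + b) with hF
  have hF1 : F 1 = 0 := by
    simp [hF, Real.rpow_one, Real.rpow_zero]
  set L : ℝ :=
      a * Real.log (a / ((a + b) / 2)) + b * Real.log (b / ((a + b) / 2)) with hL
  -- derivative of α ↦ a^α + b^α at 1
  have hSa : HasDerivAt (fun α : ℝ => a ^ α) (a * Real.log a) 1 := by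
    simpa using (Real.hasStrictDerivAt_const_rpow ha 1).hasDerivAt
  have hSb : HasDerivAt (fun α : ℝ => b ^ α) (b * Real.log b) 1 := by
    simpa using (Real.hasStrictDerivAt_const_rpow hb 1).hasDerivAt
  have hS : HasDerivAt (fun α : ℝ => a ^ α + b ^ α)
      (a * Real.log a + b * Real.log b) 1 := hSa.add hSb
  have hS1 : (fun α : ℝ => a ^ α + b ^ α) 1 = a + b := by
    simp [Real.rpow_one]
  -- derivative of α ↦ log (a^α + b^α) at 1
  have hlogS : HasDerivAt (fun α : ℝ => Real.log (a ^ α + b ^ α))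
      ((a * Real.log a + b * Real.log b) / (a + b)) 1 := by
    have := hS.log (by show a ^ (1:ℝ) + b ^ (1:ℝ) ≠ 0; rw [Real.rpow_one, Real.rpow_one]; exact hab.ne')
    simpa [hS1] using this
  -- derivative of α ↦ (1/α) * log (a^α + b^α) at 1
  have hinv : HasDerivAt (fun α : ℝ => 1 / α) (-1) 1 := by
    simpa using (hasDerivAt_inv (one_ne_zero)).congr_deriv (by norm_num)
  have hu : HasDerivAt (fun α : ℝ => (1 / α) * Real.log (a ^ α + b ^ α))
      (-Real.log (a + b) + (a * Real.log a + b * Real.log b) / (a + b)) 1 := by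
    have := hinv.fun_mul hlogS
    simpa [hS1] using this
  -- g = exp ∘ u
  have hg : HasDerivAt (fun α : ℝ => Real.exp ((1 / α) * Real.log (a ^ α + b ^ α)))
      ((a + b) * (-Real.log (a + b) + (a * Real.log a + b * Real.log b) / (a + b))) 1 := by
    have := hu.exp
    simpa [hS1, Real.exp_log hab, mul_comm] using this
  -- v = (1/α - 1) * log 2
  have hv : HasDerivAt (fun α : ℝ => (1 / α - 1) * Real.log 2) (-Real.log 2) 1 := by
    have := ((hinv.sub_const 1).mul_const (Real.log 2))
    simpa using this
  have hh : HasDerivAt (fun α : ℝ => Real.exp ((1 / α - 1) * Real.log 2) * (a + b))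
      (-Real.log 2 * (a + b)) 1 := by
    have := hv.exp.mul_const (a + b)
    simpa using this
  -- F equals the exp form
  have hFeq : F = fun α : ℝ =>
      Real.exp ((1 / α) * Real.log (a ^ α + b ^ α))
        - Real.exp ((1 / α - 1) * Real.log 2) * (a + b) := by
    funext α
    have hpos : 0 < a ^ α + b ^ α := by positivity
    rw [hF]
    show (a ^ α + b ^ α) ^ (1 / α) - 2 ^ (1 / α - 1) * (a + b) = _
    rw [Real.rpow_def_of_pos hpos, Real.rpow_def_of_pos (by norm_num : (0:ℝ) < 2)]
    ring_nf
  have hL' : L = (a + b) * (-Real.log (a + b) + (a * Real.log a + b * Real.log b) / (a + b))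
      - -Real.log 2 * (a + b) := by
    rw [hL]
    rw [Real.log_div ha.ne' (by positivity), Real.log_div hb.ne' (by positivity),
      Real.log_div hab.ne' (by norm_num)]
    field_simp
    ring
  have hFderiv : HasDerivAt F L 1 := by
    rw [hFeq, hL']
    exact hg.sub hh
  have hslope : Tendsto (slope F 1) (nhdsWithin 1 {(1:ℝ)}ᶜ) (nhds L) :=
    hasDerivAt_iff_tendsto_slope.mp hFderiv
  have hsub : Set.Ioo (0:ℝ) 1 ∪ Set.Ioi 1 ⊆ {(1:ℝ)}ᶜ := by
    rintro x (hx | hx)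
    · exact ne_of_lt hx.2
    · exact ne_of_gt hx
  have hslope' : Tendsto (slope F 1)
      (nhdsWithin 1 (Set.Ioo (0:ℝ) 1 ∪ Set.Ioi 1)) (nhds L) :=
    hslope.mono_left (nhdsWithin_mono _ hsub)
  have hid : Tendsto (fun α : ℝ => α)
      (nhdsWithin 1 (Set.Ioo (0:ℝ) 1 ∪ Set.Ioi 1)) (nhds 1) :=
    tendsto_id.mono_left nhdsWithin_le_nhds
  have hmul := hid.mul hslope'
  rw [one_mul] at hmul
  have heq : (fun α : ℝ =>
      α / (α - 1) * ((a ^ α + b ^ α) ^ (1 / α) - 2 ^ (1 / α - 1) * (a + b)))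
      = fun α : ℝ => α * slope F 1 α := by
    funext α
    rw [slope_def_field, hF1]
    simp only [hF, sub_zero]
    ring
  rw [heq]
  exact hmul
end

section
/- For η ∈ [0,1] and α ∈ (0,1) ∪ (1,∞), the infimum over t ∈ ℝ of η·ℓ̃_α(t) + (1−η)·ℓ̃_α(−t) equals (α/(α-1))·(1 − (η^α + (1−η)^α)^(1/α)), where ℓ̃_α(t) = (α/(α-1))·(1 − σ(t)^((α-1)/α)) and σ(t) = 1/(1+e^(−t)) is the sigmoid. -/
open Real Filter

private lemma key' {α w S : ℝ} (hα0 : 0 < α) (hw : 0 < w) (hS : 0 < S) :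
    w * (w ^ α / S) ^ ((α - 1) / α - 1) = S ^ (1 / α) := by
  have hA : (0:ℝ) < w ^ α := rpow_pos_of_pos hw α
  have he : (α - 1) / α - 1 = -(1 / α) := by field_simp; ring
  have hwA : (w ^ α) ^ (1 / α) = w := by
    rw [← rpow_mul hw.le, mul_one_div, div_self hα0.ne', rpow_one]
  have hSp : (0:ℝ) < S ^ (1 / α) := rpow_pos_of_pos hS _
  rw [he, rpow_neg (by positivity), div_rpow hA.le hS.le, hwA]
  field_simp

private lemma attain_term {α w S : ℝ} (hα0 : 0 < α) (hw : 0 < w) (hS : 0 < S) :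
    w * (w ^ α / S) ^ ((α - 1) / α) = w ^ α / S ^ ((α - 1) / α) := by
  have hA : (0:ℝ) < w ^ α := rpow_pos_of_pos hw α
  have hap : α * ((α - 1) / α) = α - 1 := by field_simp
  have hmul : w * w ^ (α - 1) = w ^ α := by
    have h1 := rpow_add hw 1 (α - 1)
    have h2 : 1 + (α - 1) = α := by ring
    rw [h2, rpow_one] at h1
    exact h1.symm
  calc w * (w ^ α / S) ^ ((α - 1) / α)
      = w * ((w ^ α) ^ ((α - 1) / α) / S ^ ((α - 1) / α)) := by
        rw [div_rpow hA.le hS.le]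
    _ = (w * w ^ (α - 1)) / S ^ ((α - 1) / α) := by
        rw [← rpow_mul hw.le, hap]; ring
    _ = w ^ α / S ^ ((α - 1) / α) := by rw [hmul]

private lemma attain' {α η : ℝ} (hα0 : 0 < α) (hη0 : 0 < η) (hη1 : η < 1) :
    η * (η ^ α / (η ^ α + (1 - η) ^ α)) ^ ((α - 1) / α)
      + (1 - η) * ((1 - η) ^ α / (η ^ α + (1 - η) ^ α)) ^ ((α - 1) / α)
      = (η ^ α + (1 - η) ^ α) ^ (1 / α) := by
  have hA : (0:ℝ) < η ^ α := rpow_pos_of_pos hη0 α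
  have hB : (0:ℝ) < (1 - η) ^ α := rpow_pos_of_pos (by linarith) α
  have hS0 : (0:ℝ) < η ^ α + (1 - η) ^ α := by linarith
  rw [attain_term hα0 hη0 hS0, attain_term hα0 (by linarith : (0:ℝ) < 1 - η) hS0]
  have h1 : 1 - (α - 1) / α = 1 / α := by field_simp; ring
  rw [← add_div, ← h1, rpow_sub hS0, rpow_one]

private lemma tangent_le' {p x : ℝ} (hp0 : 0 ≤ p) (hp1 : p ≤ 1) (hx : 0 < x) :
    x ^ p ≤ 1 + p * (x - 1) := by
  have h := rpow_one_add_le_one_add_mul_self (s := x - 1) (by linarith) hp0 hp1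
  simpa using h

private lemma tangent_ge' {p x : ℝ} (hp : p ≤ 0) (hx : 0 < x) :
    1 + p * (x - 1) ≤ x ^ p := by
  have h1 : p * (x - 1) ≤ p * log x :=
    mul_le_mul_of_nonpos_left (log_le_sub_one_of_pos hx) hp
  calc 1 + p * (x - 1) ≤ 1 + p * log x := by linarith
    _ ≤ exp (p * log x) := by linarith [add_one_le_exp (p * log x)]
    _ = x ^ p := by rw [rpow_def_of_pos hx p, mul_comm]

private lemma term_le' {p w u M x : ℝ} (hw : 0 < w) (hu : 0 < u) (hx : 0 < x)
    (hp0 : 0 ≤ p) (hp1 : p ≤ 1) (hkey : w * u ^ (p - 1) = M) :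
    w * x ^ p ≤ (1 - p) * M * u + p * M * x := by
  have hxu : x ^ p = u ^ p * (x / u) ^ p := by
    rw [← mul_rpow hu.le (by positivity)]
    congr 1; field_simp
  have ht := tangent_le' hp0 hp1 (div_pos hx hu)
  have hup : (0:ℝ) < u ^ p := rpow_pos_of_pos hu p
  have hupe : u ^ p = u ^ (p - 1) * u := by
    rw [← rpow_add_one hu.ne' (p - 1)]; ring_nf
  calc w * x ^ p = w * u ^ p * (x / u) ^ p := by rw [hxu]; ring
    _ ≤ w * u ^ p * (1 + p * (x / u - 1)) :=
        mul_le_mul_of_nonneg_left ht (by positivity)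
    _ = (1 - p) * (w * u ^ (p - 1)) * u + p * (w * u ^ (p - 1)) * x := by
        rw [hupe]; field_simp; ring
    _ = (1 - p) * M * u + p * M * x := by rw [hkey]

private lemma term_ge' {p w u M x : ℝ} (hw : 0 < w) (hu : 0 < u) (hx : 0 < x)
    (hp : p ≤ 0) (hkey : w * u ^ (p - 1) = M) :
    (1 - p) * M * u + p * M * x ≤ w * x ^ p := by
  have hxu : x ^ p = u ^ p * (x / u) ^ p := by
    rw [← mul_rpow hu.le (by positivity)]
    congr 1; field_simp
  have ht := tangent_ge' hp (div_pos hx hu)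
  have hup : (0:ℝ) < u ^ p := rpow_pos_of_pos hu p
  have hupe : u ^ p = u ^ (p - 1) * u := by
    rw [← rpow_add_one hu.ne' (p - 1)]; ring_nf
  calc (1 - p) * M * u + p * M * x
      = (1 - p) * (w * u ^ (p - 1)) * u + p * (w * u ^ (p - 1)) * x := by rw [hkey]
    _ = w * u ^ p * (1 + p * (x / u - 1)) := by rw [hupe]; field_simp; ring
    _ ≤ w * u ^ p * (x / u) ^ p := mul_le_mul_of_nonneg_left ht (by positivity)
    _ = w * x ^ p := by rw [hxu]; ring

private lemma core' {α η s : ℝ} (hα0 : 0 < α) (hα1 : α ≠ 1) (hη0 : 0 < η) (hη1 : η < 1)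
    (hs0 : 0 < s) (hs1 : s < 1) :
    α / (α - 1) * (η * s ^ ((α - 1) / α) + (1 - η) * (1 - s) ^ ((α - 1) / α)) ≤
      α / (α - 1) * ((η ^ α + (1 - η) ^ α) ^ (1 / α)) := by
  have hA : (0:ℝ) < η ^ α := rpow_pos_of_pos hη0 α
  have hB : (0:ℝ) < (1 - η) ^ α := rpow_pos_of_pos (by linarith) α
  have hS0 : (0:ℝ) < η ^ α + (1 - η) ^ α := by linarith
  set p := (α - 1) / α with hp
  set S := η ^ α + (1 - η) ^ α with hS
  set M := S ^ (1 / α) with hM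
  set u := η ^ α / S with hu
  have hu0 : 0 < u := div_pos hA hS0
  have hu1 : u < 1 := by rw [hu, div_lt_one hS0]; linarith
  have key1 : η * u ^ (p - 1) = M := key' hα0 hη0 hS0
  have key2 : (1 - η) * (1 - u) ^ (p - 1) = M := by
    have h1u : 1 - u = (1 - η) ^ α / S := by
      rw [hu]; field_simp; rw [hS]; ring
    rw [h1u]
    exact key' hα0 (by linarith) hS0
  rcases hα1.lt_or_gt with hlt | hgt
  · -- α < 1
    have hpneg : p ≤ 0 := div_nonpos_of_nonpos_of_nonneg (by linarith) hα0.le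
    have h1 := term_ge' hη0 hu0 hs0 hpneg key1
    have h2 := term_ge' (by linarith : (0:ℝ) < 1 - η) (by linarith : (0:ℝ) < 1 - u)
      (by linarith : (0:ℝ) < 1 - s) hpneg key2
    have hsum : M ≤ η * s ^ p + (1 - η) * (1 - s) ^ p := by nlinarith
    have hc : α / (α - 1) ≤ 0 := div_nonpos_of_nonneg_of_nonpos hα0.le (by linarith)
    exact mul_le_mul_of_nonpos_left hsum hc
  · -- 1 < α
    have hp0 : 0 ≤ p := div_nonneg (by linarith) hα0.le
    have hp1 : p ≤ 1 := by rw [hp, div_le_one hα0]; linarith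
    have h1 := term_le' hη0 hu0 hs0 hp0 hp1 key1
    have h2 := term_le' (by linarith : (0:ℝ) < 1 - η) (by linarith : (0:ℝ) < 1 - u)
      (by linarith : (0:ℝ) < 1 - s) hp0 hp1 key2
    have hsum : η * s ^ p + (1 - η) * (1 - s) ^ p ≤ M := by nlinarith
    have hc : 0 ≤ α / (α - 1) := div_nonneg hα0.le (by linarith)
    exact mul_le_mul_of_nonneg_left hsum hc

private lemma single_nonneg {α x : ℝ} (hα0 : 0 < α) (hα1 : α ≠ 1) (hx0 : 0 < x) (hx1 : x < 1) :
    0 ≤ α / (α - 1) * (1 - x ^ ((α - 1) / α)) := by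
  rcases hα1.lt_or_gt with hlt | hgt
  · have hc : α / (α - 1) ≤ 0 := div_nonpos_of_nonneg_of_nonpos hα0.le (by linarith)
    have hpneg : (α - 1) / α < 0 := div_neg_of_neg_of_pos (by linarith) hα0
    have hx : 1 < x ^ ((α - 1) / α) :=
      (Real.one_lt_rpow_iff_of_pos hx0).2 (Or.inr ⟨hx1, hpneg⟩)
    have : 1 - x ^ ((α - 1) / α) ≤ 0 := by linarith
    nlinarith
  · have hc : 0 ≤ α / (α - 1) := div_nonneg hα0.le (by linarith)
    have hx : x ^ ((α - 1) / α) ≤ 1 :=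
      Real.rpow_le_one hx0.le hx1.le (div_nonneg (by linarith) hα0.le)
    exact mul_nonneg hc (by linarith)

private lemma iInf_eq_zero' {g : ℝ → ℝ} (l : Filter ℝ) [l.NeBot] (h0 : ∀ t, 0 ≤ g t)
    (hl : Filter.Tendsto g l (nhds 0)) : (⨅ t, g t) = 0 := by
  have hbdd : BddBelow (Set.range g) := ⟨0, by rintro y ⟨t, rfl⟩; exact h0 t⟩
  exact le_antisymm (ge_of_tendsto' hl fun x => ciInf_le hbdd x) (le_ciInf h0)

private lemma single_inf {α : ℝ} (hα0 : 0 < α) (hα1 : α ≠ 1) {x : ℝ → ℝ} (l : Filter ℝ)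
    [l.NeBot] (hx0 : ∀ t, 0 < x t) (hx1 : ∀ t, x t < 1)
    (hlim : Filter.Tendsto x l (nhds 1)) :
    (⨅ t, α / (α - 1) * (1 - x t ^ ((α - 1) / α))) = 0 := by
  apply iInf_eq_zero' l (fun t => single_nonneg hα0 hα1 (hx0 t) (hx1 t))
  have h : Filter.Tendsto (fun t => α / (α - 1) * (1 - x t ^ ((α - 1) / α))) l
      (nhds (α / (α - 1) * (1 - (1:ℝ) ^ ((α - 1) / α)))) :=
    tendsto_const_nhds.mul (tendsto_const_nhds.sub (hlim.rpow_const (Or.inl one_ne_zero)))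
  simpa using h

theorem margin_alpha_loss_inf (α η : ℝ) (hα : α ∈ Set.Ioo (0:ℝ) 1 ∪ Set.Ioi 1)
    (hη : η ∈ Set.Icc (0:ℝ) 1) :
    (⨅ t : ℝ,
        (η * (α / (α - 1) * (1 - (1 / (1 + Real.exp (-t))) ^ ((α - 1) / α))) +
          (1 - η) * (α / (α - 1) * (1 - (1 / (1 + Real.exp t)) ^ ((α - 1) / α))))) =
      α / (α - 1) * (1 - (η ^ α + (1 - η) ^ α) ^ (1 / α)) := by
  have hα0 : 0 < α := by
    rcases hα with h | h
    · exact h.1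
    · exact lt_trans one_pos h
  have hα1 : α ≠ 1 := by
    rcases hα with h | h
    · exact ne_of_lt h.2
    · exact ne_of_gt h
  obtain ⟨hη0, hη1⟩ := hη
  have hex : ∀ t : ℝ, (0:ℝ) < 1 + Real.exp (-t) := fun t => by positivity
  have hsp : ∀ t : ℝ, (0:ℝ) < 1 / (1 + Real.exp (-t)) := fun t => by positivity
  have hs1 : ∀ t : ℝ, 1 / (1 + Real.exp (-t)) < 1 := fun t => by
    rw [div_lt_one (hex t)]; linarith [Real.exp_pos (-t)]
  have hsp' : ∀ t : ℝ, (0:ℝ) < 1 / (1 + Real.exp t) := fun t => by positivity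
  have hs1' : ∀ t : ℝ, 1 / (1 + Real.exp t) < 1 := fun t => by
    have h : (0:ℝ) < 1 + Real.exp t := by positivity
    rw [div_lt_one h]; linarith [Real.exp_pos t]
  have hflip : ∀ t : ℝ, 1 / (1 + Real.exp t) = 1 - 1 / (1 + Real.exp (-t)) := fun t => by
    have h1 : (0:ℝ) < 1 + Real.exp t := by positivity
    have h2 := hex t
    have h3 : Real.exp t * Real.exp (-t) = 1 := by
      rw [← Real.exp_add]; simp
    field_simp
    nlinarith [h3]
  rcases eq_or_lt_of_le hη0 with h0 | h0
  · -- η = 0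
    subst h0
    simp only [zero_mul, sub_zero, one_mul, zero_add]
    have hz : (0:ℝ) ^ α + (1:ℝ) ^ α = 1 := by
      rw [Real.zero_rpow hα0.ne']
      norm_num
    rw [hz, Real.one_rpow, sub_self, mul_zero]
    have hexpB : Filter.Tendsto (fun t : ℝ => Real.exp t) Filter.atBot (nhds 0) :=
      Real.tendsto_exp_atBot
    have hlimB : Filter.Tendsto (fun t : ℝ => 1 / (1 + Real.exp t)) Filter.atBot (nhds 1) := by
      have h := Filter.Tendsto.div (tendsto_const_nhds (x := (1:ℝ)))
        (tendsto_const_nhds.add hexpB) (by norm_num : (1:ℝ) + 0 ≠ 0)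
      simpa [Pi.div_def] using h
    exact single_inf hα0 hα1 Filter.atBot hsp' hs1' hlimB
  rcases eq_or_lt_of_le hη1 with h1 | h1
  · -- η = 1
    subst h1
    simp only [sub_self, zero_mul, add_zero, one_mul]
    have hz : (1:ℝ) ^ α + (0:ℝ) ^ α = 1 := by
      rw [Real.zero_rpow hα0.ne', Real.one_rpow]
      norm_num
    rw [hz, Real.one_rpow, sub_self, mul_zero]
    have hexpT : Filter.Tendsto (fun t : ℝ => Real.exp (-t)) Filter.atTop (nhds 0) :=
      Real.tendsto_exp_atBot.comp tendsto_neg_atTop_atBot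
    have hlimT : Filter.Tendsto (fun t : ℝ => 1 / (1 + Real.exp (-t))) Filter.atTop (nhds 1) := by
      have h := Filter.Tendsto.div (tendsto_const_nhds (x := (1:ℝ)))
        (tendsto_const_nhds.add hexpT) (by norm_num : (1:ℝ) + 0 ≠ 0)
      simpa [Pi.div_def] using h
    exact single_inf hα0 hα1 Filter.atTop hsp hs1 hlimT
  · -- 0 < η < 1
    have hA : (0:ℝ) < η ^ α := Real.rpow_pos_of_pos h0 α
    have hB : (0:ℝ) < (1 - η) ^ α := Real.rpow_pos_of_pos (by linarith) α
    have hS0 : (0:ℝ) < η ^ α + (1 - η) ^ α := by linarith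
    have hlow : ∀ t : ℝ,
        α / (α - 1) * (1 - (η ^ α + (1 - η) ^ α) ^ (1 / α)) ≤
          η * (α / (α - 1) * (1 - (1 / (1 + Real.exp (-t))) ^ ((α - 1) / α))) +
            (1 - η) * (α / (α - 1) * (1 - (1 / (1 + Real.exp t)) ^ ((α - 1) / α))) := by
      intro t
      rw [hflip t]
      have hc := core' hα0 hα1 h0 h1 (hsp t) (hs1 t)
      nlinarith [hc]
    have hbdd : BddBelow (Set.range fun t : ℝ =>
        η * (α / (α - 1) * (1 - (1 / (1 + Real.exp (-t))) ^ ((α - 1) / α))) +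
          (1 - η) * (α / (α - 1) * (1 - (1 / (1 + Real.exp t)) ^ ((α - 1) / α)))) :=
      ⟨_, by rintro y ⟨t, rfl⟩; exact hlow t⟩
    set T := Real.log (η ^ α / (1 - η) ^ α) with hT
    have hsT : 1 / (1 + Real.exp (-T)) = η ^ α / (η ^ α + (1 - η) ^ α) := by
      have he : Real.exp (-T) = (1 - η) ^ α / η ^ α := by
        rw [hT, Real.exp_neg, Real.exp_log (div_pos hA hB), inv_div]
      rw [he]
      have hd : 1 + (1 - η) ^ α / η ^ α = (η ^ α + (1 - η) ^ α) / η ^ α := by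
        field_simp
      rw [hd, one_div_div]
    have h1u : 1 - η ^ α / (η ^ α + (1 - η) ^ α) = (1 - η) ^ α / (η ^ α + (1 - η) ^ α) := by
      field_simp; ring
    have hval :
        η * (α / (α - 1) * (1 - (1 / (1 + Real.exp (-T))) ^ ((α - 1) / α))) +
          (1 - η) * (α / (α - 1) * (1 - (1 / (1 + Real.exp T)) ^ ((α - 1) / α))) =
        α / (α - 1) * (1 - (η ^ α + (1 - η) ^ α) ^ (1 / α)) := by
      rw [hflip T, hsT, h1u]
      have hat := attain' hα0 h0 h1
      linear_combination (-(α / (α - 1))) * hat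
    refine le_antisymm ((ciInf_le hbdd T).trans_eq ?_) (le_ciInf hlow)
    exact hval
end

section
/- For u ≥ 0 and α ∈ (0,1) ∪ (1,∞), −inf_t (u·ℓ̃_α(t) + ℓ̃_α(−t)) = (α/(α-1))·((u^α + 1)^(1/α) − (1+u)), where ℓ̃_α(t) = (α/(α-1))·(1 − σ(t)^((α-1)/α)) with σ the sigmoid; equivalently, f_α(u) = −inf_t(u·ℓ̃_α(t) + ℓ̃_α(−t)) − (α/(α-1))·(2^(1/α) − 2). -/
open Real


lemma rev_amgm {x y p : ℝ} (hx : 0 ≤ x) (hy : 0 < y) (hp : 1 < p) :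
    p * x + (1 - p) * y ≤ x ^ p * y ^ (1 - p) := by
  rcases eq_or_lt_of_le hx with rfl | hx
  · rw [Real.zero_rpow (by positivity : p ≠ 0), zero_mul]
    nlinarith [Real.rpow_pos_of_pos hy (1 - p)]
  · have h1 : -1 ≤ x / y - 1 := by
      have : 0 ≤ x / y := by positivity
      linarith
    have h2 := one_add_mul_self_le_rpow_one_add h1 hp.le
    rw [add_sub_cancel] at h2
    have hxy : (x / y) ^ p = x ^ p / y ^ p := Real.div_rpow hx.le hy.le p
    have hy1 : y ^ (1 - p) = y / y ^ p := by
      rw [Real.rpow_sub hy, Real.rpow_one]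
    rw [hxy] at h2
    have hyp : 0 < y ^ p := Real.rpow_pos_of_pos hy p
    rw [hy1]
    have := mul_le_mul_of_nonneg_right h2 hy.le
    calc p * x + (1 - p) * y = (1 + p * (x / y - 1)) * y := by field_simp; ring
      _ ≤ x ^ p / y ^ p * y := this
      _ = x ^ p * (y / y ^ p) := by ring

lemma holder_pt (α u s : ℝ) (hα : α ∈ Set.Ioo (0:ℝ) 1 ∪ Set.Ioi 1) (hu : 0 ≤ u)
    (hs0 : 0 < s) (hs1 : s < 1) :
    α / (α - 1) * (u + 1) - α / (α - 1) * (u ^ α + 1) ^ (1 / α) ≤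
      u * (α / (α - 1) * (1 - s ^ ((α - 1) / α))) +
        α / (α - 1) * (1 - (1 - s) ^ ((α - 1) / α)) := by
  have hα0 : 0 < α := by rcases hα with h | h; exacts [h.1, lt_trans one_pos (Set.mem_Ioi.mp h)]
  have hS : (0:ℝ) < u ^ α + 1 := by positivity
  set S : ℝ := u ^ α + 1 with hSdef
  set p : ℝ := 1 / α with hpdef
  have hβ : (α - 1) / α = 1 - p := by rw [hpdef]; field_simp
  have hp0 : 0 < p := by rw [hpdef]; positivity
  have hSp : 0 < S ^ p := Real.rpow_pos_of_pos hS p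
  have huα : 0 ≤ u ^ α := Real.rpow_nonneg hu α
  have hx1 : (0:ℝ) ≤ u ^ α / S := div_nonneg huα hS.le
  have hx2 : (0:ℝ) < 1 / S := by positivity
  have hαp : α * p = 1 := by rw [hpdef]; field_simp
  have hid1 : u * s ^ (1 - p) = S ^ p * ((u ^ α / S) ^ p * s ^ (1 - p)) := by
    have h : S ^ p * (u ^ α / S) ^ p = u := by
      rw [← Real.mul_rpow hS.le hx1, mul_div_cancel₀ _ hS.ne',
        ← Real.rpow_mul hu, hαp, Real.rpow_one]
    rw [← mul_assoc, h]
  have hid2 : (1 - s) ^ (1 - p) = S ^ p * ((1 / S) ^ p * (1 - s) ^ (1 - p)) := by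
    have h : S ^ p * (1 / S) ^ p = 1 := by
      rw [← Real.mul_rpow hS.le hx2.le, mul_one_div, div_self hS.ne', Real.one_rpow]
    rw [← mul_assoc, h, one_mul]
  have harith : p * (u ^ α / S) + (1 - p) * s + (p * (1 / S) + (1 - p) * (1 - s)) = 1 := by
    have hfrac : u ^ α / S + 1 / S = 1 := by
      rw [← add_div, ← hSdef, div_self hS.ne']
    linear_combination p * hfrac
  have key : α / (α - 1) * (u * s ^ (1 - p) + (1 - s) ^ (1 - p)) ≤ α / (α - 1) * S ^ p := by
    rcases hα with h | h
    · -- 0 < α < 1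
      have hα1 : α < 1 := h.2
      have hc : α / (α - 1) < 0 := div_neg_of_pos_of_neg hα0 (by linarith)
      have hp1 : 1 < p := by rw [hpdef, lt_div_iff₀ hα0]; linarith
      have h1 := rev_amgm (x := u ^ α / S) (y := s) hx1 hs0 hp1
      have h2 := rev_amgm (x := 1 / S) (y := 1 - s) hx2.le (by linarith) hp1
      have hsum : S ^ p ≤ u * s ^ (1 - p) + (1 - s) ^ (1 - p) := by
        rw [hid1, hid2, ← mul_add]
        have h3 := mul_le_mul_of_nonneg_left (add_le_add h1 h2) hSp.le
        calc S ^ p = S ^ p * (p * (u ^ α / S) + (1 - p) * s +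
              (p * (1 / S) + (1 - p) * (1 - s))) := by rw [harith, mul_one]
          _ ≤ _ := h3
      nlinarith
    · -- α > 1
      have hα1 : 1 < α := Set.mem_Ioi.mp h
      have hc : 0 < α / (α - 1) := div_pos hα0 (by linarith)
      have hp1 : p < 1 := by rw [hpdef, div_lt_one hα0]; linarith
      have h1 := Real.geom_mean_le_arith_mean2_weighted (w₁ := p) (w₂ := 1 - p)
        (p₁ := u ^ α / S) (p₂ := s) hp0.le (by linarith) hx1 hs0.le (by ring)
      have h2 := Real.geom_mean_le_arith_mean2_weighted (w₁ := p) (w₂ := 1 - p)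
        (p₁ := 1 / S) (p₂ := 1 - s) hp0.le (by linarith) hx2.le (by linarith) (by ring)
      have hsum : u * s ^ (1 - p) + (1 - s) ^ (1 - p) ≤ S ^ p := by
        rw [hid1, hid2, ← mul_add]
        have h3 := mul_le_mul_of_nonneg_left (add_le_add h1 h2) hSp.le
        calc S ^ p * ((u ^ α / S) ^ p * s ^ (1 - p) + (1 / S) ^ p * (1 - s) ^ (1 - p))
            ≤ S ^ p * (p * (u ^ α / S) + (1 - p) * s +
              (p * (1 / S) + (1 - p) * (1 - s))) := h3
          _ = S ^ p := by rw [harith, mul_one]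
      nlinarith
  rw [hβ]
  nlinarith [key]


lemma attain_pt (α u : ℝ) (hα0 : 0 < α) (hu : 0 < u) :
    u * (u ^ α / (u ^ α + 1)) ^ ((α - 1) / α) +
      (1 / (u ^ α + 1)) ^ ((α - 1) / α) = (u ^ α + 1) ^ (1 / α) := by
  have huα : 0 < u ^ α := Real.rpow_pos_of_pos hu α
  have hS : (0:ℝ) < u ^ α + 1 := by positivity
  have hSb : 0 < (u ^ α + 1) ^ ((α - 1) / α) := Real.rpow_pos_of_pos hS _
  have h1 : (u ^ α / (u ^ α + 1)) ^ ((α - 1) / α) =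
      u ^ (α - 1) / (u ^ α + 1) ^ ((α - 1) / α) := by
    rw [Real.div_rpow huα.le hS.le, ← Real.rpow_mul hu.le]
    congr 2
    field_simp
  have h2 : (1 / (u ^ α + 1)) ^ ((α - 1) / α) =
      1 / (u ^ α + 1) ^ ((α - 1) / α) := by
    rw [Real.div_rpow zero_le_one hS.le, Real.one_rpow]
  have h3 : u * u ^ (α - 1) = u ^ α := by
    nth_rewrite 1 [← Real.rpow_one u]
    rw [← Real.rpow_add hu]
    ring_nf
  have h4 : (u ^ α + 1) / (u ^ α + 1) ^ ((α - 1) / α) = (u ^ α + 1) ^ (1 / α) := by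
    rw [div_eq_iff hSb.ne', ← Real.rpow_add hS]
    field_simp
    rw [show (1 + (α - 1)) / α = (1:ℝ) by rw [div_eq_one_iff_eq hα0.ne']; ring, Real.rpow_one]
  rw [h1, h2, mul_div_assoc', h3, ← add_div, h4]

theorem arimoto_from_margin_loss (α u : ℝ) (hα : α ∈ Set.Ioo (0:ℝ) 1 ∪ Set.Ioi 1)
    (hu : 0 ≤ u) :
    (-(⨅ t : ℝ,
        (u * (α / (α - 1) * (1 - (1 / (1 + Real.exp (-t))) ^ ((α - 1) / α))) +
          α / (α - 1) * (1 - (1 / (1 + Real.exp t)) ^ ((α - 1) / α)))) =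
      α / (α - 1) * ((u ^ α + 1) ^ (1 / α) - (1 + u))) ∧
    α / (α - 1) * ((1 + u ^ α) ^ (1 / α) - (1 + u) - 2 ^ (1 / α) + 2) =
      -(⨅ t : ℝ,
        (u * (α / (α - 1) * (1 - (1 / (1 + Real.exp (-t))) ^ ((α - 1) / α))) +
          α / (α - 1) * (1 - (1 / (1 + Real.exp t)) ^ ((α - 1) / α)))) -
        α / (α - 1) * (2 ^ (1 / α) - 2) := by
  have hα0 : 0 < α := by rcases hα with h | h; exacts [h.1, lt_trans one_pos (Set.mem_Ioi.mp h)]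
  -- sigmoid facts
  have hsig : ∀ t : ℝ, 0 < 1 / (1 + Real.exp (-t)) ∧ 1 / (1 + Real.exp (-t)) < 1 ∧
      1 / (1 + Real.exp t) = 1 - 1 / (1 + Real.exp (-t)) := by
    intro t
    have he : 0 < Real.exp (-t) := Real.exp_pos _
    have he' : 0 < Real.exp t := Real.exp_pos _
    refine ⟨by positivity, ?_, ?_⟩
    · rw [div_lt_one (by positivity)]; linarith
    · rw [Real.exp_neg]
      field_simp
      ring
  -- lower bound
  have hlb : ∀ t : ℝ,
      α / (α - 1) * (u + 1) - α / (α - 1) * (u ^ α + 1) ^ (1 / α) ≤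
        u * (α / (α - 1) * (1 - (1 / (1 + Real.exp (-t))) ^ ((α - 1) / α))) +
          α / (α - 1) * (1 - (1 / (1 + Real.exp t)) ^ ((α - 1) / α)) := by
    intro t
    obtain ⟨h1, h2, h3⟩ := hsig t
    rw [h3]
    exact holder_pt α u _ hα hu h1 h2
  have hbdd : BddBelow (Set.range fun t : ℝ =>
      u * (α / (α - 1) * (1 - (1 / (1 + Real.exp (-t))) ^ ((α - 1) / α))) +
        α / (α - 1) * (1 - (1 / (1 + Real.exp t)) ^ ((α - 1) / α))) := by
    refine ⟨α / (α - 1) * (u + 1) - α / (α - 1) * (u ^ α + 1) ^ (1 / α), ?_⟩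
    rintro x ⟨t, rfl⟩
    exact hlb t
  -- upper bound
  have hub : (⨅ t : ℝ,
      (u * (α / (α - 1) * (1 - (1 / (1 + Real.exp (-t))) ^ ((α - 1) / α))) +
        α / (α - 1) * (1 - (1 / (1 + Real.exp t)) ^ ((α - 1) / α)))) ≤
      α / (α - 1) * (u + 1) - α / (α - 1) * (u ^ α + 1) ^ (1 / α) := by
    rcases hu.eq_or_lt with rfl | hu0
    · -- u = 0
      have hL0 : (0:ℝ) ^ α = 0 := Real.zero_rpow hα0.ne'
      have hT : Filter.Tendsto (fun t : ℝ =>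
          (0:ℝ) * (α / (α - 1) * (1 - (1 / (1 + Real.exp (-t))) ^ ((α - 1) / α))) +
            α / (α - 1) * (1 - (1 / (1 + Real.exp t)) ^ ((α - 1) / α)))
          Filter.atBot (nhds 0) := by
        have h1 : Filter.Tendsto (fun t : ℝ => 1 + Real.exp t) Filter.atBot (nhds 1) := by
          simpa using Filter.Tendsto.add (tendsto_const_nhds (x := (1:ℝ)))
            Real.tendsto_exp_atBot
        have h2 : Filter.Tendsto (fun t : ℝ => 1 / (1 + Real.exp t)) Filter.atBot
            (nhds 1) := by
          simpa [one_div] using h1.inv₀ one_ne_zero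
        have hc : ContinuousAt (fun x : ℝ => x ^ ((α - 1) / α)) 1 :=
          Real.continuousAt_rpow_const 1 _ (Or.inl one_ne_zero)
        have h3 : Filter.Tendsto (fun t : ℝ => (1 / (1 + Real.exp t)) ^ ((α - 1) / α))
            Filter.atBot (nhds 1) := by
          simpa [Function.comp_def] using hc.tendsto.comp h2
        have h4 := (Filter.Tendsto.sub (tendsto_const_nhds (x := (1:ℝ))) h3).const_mul
          (α / (α - 1))
        simpa using h4
      have := ge_of_tendsto' hT (fun t => ciInf_le hbdd t)
      rw [hL0]
      simpa using this
    · -- u > 0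
      have huα : 0 < u ^ α := Real.rpow_pos_of_pos hu0 α
      have hS : (0:ℝ) < u ^ α + 1 := by positivity
      have hval : u * (α / (α - 1) *
            (1 - (1 / (1 + Real.exp (-(Real.log (u ^ α))))) ^ ((α - 1) / α))) +
          α / (α - 1) * (1 - (1 / (1 + Real.exp (Real.log (u ^ α)))) ^ ((α - 1) / α)) =
          α / (α - 1) * (u + 1) - α / (α - 1) * (u ^ α + 1) ^ (1 / α) := by
        rw [Real.exp_neg, Real.exp_log huα]
        have e1 : 1 / (1 + (u ^ α)⁻¹) = u ^ α / (u ^ α + 1) := by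
          rw [eq_div_iff hS.ne']
          field_simp
        have e2 : 1 / (1 + u ^ α) = 1 / (u ^ α + 1) := by rw [add_comm]
        rw [e1, e2]
        linear_combination (-(α / (α - 1))) * attain_pt α u hα0 hu0
      calc _ ≤ _ := ciInf_le hbdd (Real.log (u ^ α))
        _ = _ := hval
  have hinf : (⨅ t : ℝ,
      (u * (α / (α - 1) * (1 - (1 / (1 + Real.exp (-t))) ^ ((α - 1) / α))) +
        α / (α - 1) * (1 - (1 / (1 + Real.exp t)) ^ ((α - 1) / α)))) =
      α / (α - 1) * (u + 1) - α / (α - 1) * (u ^ α + 1) ^ (1 / α) :=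
    le_antisymm hub (le_ciInf hlb)
  constructor
  · rw [hinf]; ring
  · rw [hinf, add_comm (1:ℝ) (u ^ α)]; ring
end

section
/- For α ∈ (0,1) ∪ (1,∞), the function ψ_α : [0,1] → ℝ defined by ψ_α(p) = (α/(α-1))·(((1+p)^α + (1−p)^α)^(1/α) − 2^(1/α)) is convex and strictly monotone increasing, with ψ_α(0) = 0 and ψ_α(1) = (α/(α-1))·(2 − 2^(1/α)). -/
open Real Set

noncomputable def psiD1 (α x : ℝ) : ℝ :=
  α / (α - 1) * (((1 + x) ^ α + (1 - x) ^ α) ^ (1 / α - 1) *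
    ((1 + x) ^ (α - 1) - (1 - x) ^ (α - 1)))

noncomputable def psiD2 (α x : ℝ) : ℝ :=
  α * (((1 + x) ^ α + (1 - x) ^ α) ^ (1 / α - 2)) *
    ((1 + x) ^ α * (1 - x) ^ (α - 2) + (1 + x) ^ (α - 2) * (1 - x) ^ α +
      2 * (1 + x) ^ (α - 1) * (1 - x) ^ (α - 1))

lemma psi_g_pos (α : ℝ) {x : ℝ} (hx : x ∈ Set.Ioo (-1:ℝ) 1) :
    0 < (1 + x) ^ α + (1 - x) ^ α := by
  have h1 : (0:ℝ) < 1 + x := by linarith [hx.1]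
  have h2 : (0:ℝ) < 1 - x := by linarith [hx.2]
  have := Real.rpow_pos_of_pos h1 α
  have := Real.rpow_pos_of_pos h2 α
  linarith

lemma hasDerivAt_psi (α : ℝ) (hα0 : 0 < α) {x : ℝ} (hx : x ∈ Set.Ioo (-1:ℝ) 1) :
    HasDerivAt
      (fun p : ℝ => α / (α - 1) * (((1 + p) ^ α + (1 - p) ^ α) ^ (1 / α) - 2 ^ (1 / α)))
      (psiD1 α x) x := by
  have h1 : (0:ℝ) < 1 + x := by linarith [hx.1]
  have h2 : (0:ℝ) < 1 - x := by linarith [hx.2]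
  have hg := psi_g_pos α hx
  have d1 : HasDerivAt (fun p : ℝ => (1 + p) ^ α) (1 * α * (1 + x) ^ (α - 1)) x :=
    ((hasDerivAt_id x).const_add 1).rpow_const (Or.inl h1.ne')
  have d2 : HasDerivAt (fun p : ℝ => (1 - p) ^ α) ((-1) * α * (1 - x) ^ (α - 1)) x :=
    ((hasDerivAt_id x).const_sub 1).rpow_const (Or.inl h2.ne')
  have dg := d1.add d2
  have dgr := dg.rpow_const (p := 1 / α) (Or.inl hg.ne')
  have final := ((dgr.sub_const ((2:ℝ) ^ (1 / α))).const_mul (α / (α - 1)))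
  refine final.congr_deriv (Eq.symm ?_)
  simp only [Pi.add_apply, Pi.sub_apply]
  unfold psiD1
  have hα : α ≠ 0 := hα0.ne'
  have hsim : (1 * α * (1 + x) ^ (α - 1) + -1 * α * (1 - x) ^ (α - 1)) * (1 / α)
      = (1 + x) ^ (α - 1) - (1 - x) ^ (α - 1) := by
    field_simp; ring
  rw [hsim]
  ring

lemma hasDerivAt_psiD1 (α : ℝ) (hα0 : 0 < α) (hne : α - 1 ≠ 0) {x : ℝ}
    (hx : x ∈ Set.Ioo (-1:ℝ) 1) :
    HasDerivAt (psiD1 α) (psiD2 α x) x := by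
  have h1 : (0:ℝ) < 1 + x := by linarith [hx.1]
  have h2 : (0:ℝ) < 1 - x := by linarith [hx.2]
  have hg := psi_g_pos α hx
  have d1 : HasDerivAt (fun p : ℝ => (1 + p) ^ α) (1 * α * (1 + x) ^ (α - 1)) x :=
    ((hasDerivAt_id x).const_add 1).rpow_const (Or.inl h1.ne')
  have d2 : HasDerivAt (fun p : ℝ => (1 - p) ^ α) ((-1) * α * (1 - x) ^ (α - 1)) x :=
    ((hasDerivAt_id x).const_sub 1).rpow_const (Or.inl h2.ne')
  have dg := d1.add d2
  have dgr := dg.rpow_const (p := 1 / α - 1) (Or.inl hg.ne')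
  have e1 : HasDerivAt (fun p : ℝ => (1 + p) ^ (α - 1)) (1 * (α - 1) * (1 + x) ^ (α - 1 - 1)) x :=
    ((hasDerivAt_id x).const_add 1).rpow_const (Or.inl h1.ne')
  have e2 : HasDerivAt (fun p : ℝ => (1 - p) ^ (α - 1)) ((-1) * (α - 1) * (1 - x) ^ (α - 1 - 1)) x :=
    ((hasDerivAt_id x).const_sub 1).rpow_const (Or.inl h2.ne')
  have ed := e1.sub e2
  have prod := dgr.mul ed
  have final := prod.const_mul (α / (α - 1))
  refine final.congr_deriv (Eq.symm ?_)
  simp only [Pi.add_apply, Pi.sub_apply]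
  unfold psiD2
  have hα : α ≠ 0 := hα0.ne'
  set a := 1 + x with ha
  set b := 1 - x with hb
  have ex1 : a ^ (α - 1 - 1) = a ^ (α - 2) := by rw [show α - 1 - 1 = α - 2 by ring]
  have ex2 : b ^ (α - 1 - 1) = b ^ (α - 2) := by rw [show α - 1 - 1 = α - 2 by ring]
  have ex3 : (a ^ α + b ^ α) ^ (1 / α - 1 - 1) = (a ^ α + b ^ α) ^ (1 / α - 2) := by
    rw [show 1 / α - 1 - 1 = 1 / α - 2 by ring]
  rw [ex1, ex2, ex3]
  have ia : a ^ α * a ^ (α - 2) = a ^ (α - 1) * a ^ (α - 1) := by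
    rw [← Real.rpow_add h1, ← Real.rpow_add h1]; ring_nf
  have ib : b ^ α * b ^ (α - 2) = b ^ (α - 1) * b ^ (α - 1) := by
    rw [← Real.rpow_add h2, ← Real.rpow_add h2]; ring_nf
  have ig : (a ^ α + b ^ α) ^ (1 / α - 1) =
      (a ^ α + b ^ α) * (a ^ α + b ^ α) ^ (1 / α - 2) := by
    rw [show 1 / α - 1 = 1 + (1 / α - 2) by ring, Real.rpow_add hg, Real.rpow_one]
  have hsim2 : (1 * α * a ^ (α - 1) + -1 * α * b ^ (α - 1)) * (1 / α - 1)
      = (1 - α) * (a ^ (α - 1) - b ^ (α - 1)) := by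
    field_simp; ring
  rw [ig, hsim2]
  have keyc : α / (α - 1) * (α - 1) = α := div_mul_cancel₀ α hne
  linear_combination (-((-((a ^ (α-1) - b ^ (α-1)))^2 + (a ^ α + b ^ α) * (a ^ (α-2) + b ^ (α-2))) * ((a ^ α + b ^ α) ^ (1/α - 2)))) * keyc + (-(α * (a ^ α + b ^ α) ^ (1/α - 2))) * ia + (-(α * (a ^ α + b ^ α) ^ (1/α - 2))) * ib

theorem psi_alpha_properties (α : ℝ) (hα : α ∈ Set.Ioo (0:ℝ) 1 ∪ Set.Ioi 1) :
    ConvexOn ℝ (Set.Icc (0:ℝ) 1)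
      (fun p : ℝ => α / (α - 1) * (((1 + p) ^ α + (1 - p) ^ α) ^ (1 / α) - 2 ^ (1 / α))) ∧
    StrictMonoOn
      (fun p : ℝ => α / (α - 1) * (((1 + p) ^ α + (1 - p) ^ α) ^ (1 / α) - 2 ^ (1 / α)))
      (Set.Icc (0:ℝ) 1) ∧
    α / (α - 1) * (((1 + (0:ℝ)) ^ α + (1 - (0:ℝ)) ^ α) ^ (1 / α) - 2 ^ (1 / α)) = 0 ∧
    α / (α - 1) * (((1 + (1:ℝ)) ^ α + (1 - (1:ℝ)) ^ α) ^ (1 / α) - 2 ^ (1 / α)) =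
      α / (α - 1) * (2 - 2 ^ (1 / α)) := by
  have hα0 : 0 < α := by
    rcases hα with h | h
    · exact h.1
    · linarith [Set.mem_Ioi.mp h]
  have hne : α - 1 ≠ 0 := by
    rcases hα with h | h
    · have := h.2; intro hc; linarith
    · have := Set.mem_Ioi.mp h; intro hc; linarith
  set f := fun p : ℝ => α / (α - 1) * (((1 + p) ^ α + (1 - p) ^ α) ^ (1 / α) - 2 ^ (1 / α))
    with hf
  have hcont : Continuous f := by
    apply Continuous.mul continuous_const
    apply Continuous.sub _ continuous_const
    apply Continuous.rpow_const
    · exact ((continuous_const.add continuous_id).rpow_const (fun x => Or.inr hα0.le)).add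
        ((continuous_const.sub continuous_id).rpow_const (fun x => Or.inr hα0.le))
    · intro x; right; positivity
  have hsub : Set.Ioo (0:ℝ) 1 ⊆ Set.Ioo (-1:ℝ) 1 := fun x hx => ⟨by linarith [hx.1], hx.2⟩
  have hderiv_eq : ∀ x ∈ Set.Ioo (-1:ℝ) 1, deriv f x = psiD1 α x := fun x hx =>
    (hasDerivAt_psi α hα0 hx).deriv
  constructor
  · -- convexity
    apply convexOn_of_deriv2_nonneg (convex_Icc 0 1) hcont.continuousOn
    · rw [interior_Icc]
      exact fun x hx => (hasDerivAt_psi α hα0 (hsub hx)).differentiableAt.differentiableWithinAt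
    · rw [interior_Icc]
      intro x hx
      have hev : deriv f =ᶠ[nhds x] psiD1 α :=
        Filter.eventuallyEq_of_mem (isOpen_Ioo.mem_nhds (hsub hx)) hderiv_eq
      exact (((hasDerivAt_psiD1 α hα0 hne (hsub hx)).congr_of_eventuallyEq
        hev).differentiableAt).differentiableWithinAt
    · rw [interior_Icc]
      intro x hx
      have h1 : (0:ℝ) < 1 + x := by linarith [hx.1]
      have h2 : (0:ℝ) < 1 - x := by linarith [hx.2]
      have hev : deriv f =ᶠ[nhds x] psiD1 α :=
        Filter.eventuallyEq_of_mem (isOpen_Ioo.mem_nhds (hsub hx)) hderiv_eq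
      have h2deriv : deriv (deriv f) x = psiD2 α x := by
        rw [hev.deriv_eq]
        exact (hasDerivAt_psiD1 α hα0 hne (hsub hx)).deriv
      show 0 ≤ deriv^[2] f x
      rw [show deriv^[2] f = deriv (deriv f) from rfl, h2deriv]
      unfold psiD2
      have t0 : (0:ℝ) ≤ ((1 + x) ^ α + (1 - x) ^ α) ^ (1 / α - 2) :=
        Real.rpow_nonneg (psi_g_pos α (hsub hx)).le _
      have t1 : (0:ℝ) ≤ (1 + x) ^ α * (1 - x) ^ (α - 2) :=
        mul_nonneg (Real.rpow_nonneg h1.le _) (Real.rpow_nonneg h2.le _)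
      have t2 : (0:ℝ) ≤ (1 + x) ^ (α - 2) * (1 - x) ^ α :=
        mul_nonneg (Real.rpow_nonneg h1.le _) (Real.rpow_nonneg h2.le _)
      have t3 : (0:ℝ) ≤ (1 + x) ^ (α - 1) * (1 - x) ^ (α - 1) :=
        mul_nonneg (Real.rpow_nonneg h1.le _) (Real.rpow_nonneg h2.le _)
      have := mul_nonneg hα0.le t0
      nlinarith
  constructor
  · -- strict monotonicity
    apply strictMonoOn_of_deriv_pos (convex_Icc 0 1) hcont.continuousOn
    intro x hx
    rw [interior_Icc] at hx
    have h1 : (0:ℝ) < 1 + x := by linarith [hx.1]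
    have h2 : (0:ℝ) < 1 - x := by linarith [hx.2]
    have hab : 1 - x < 1 + x := by linarith [hx.1]
    rw [hderiv_eq x (hsub hx)]
    unfold psiD1
    have hG : (0:ℝ) < ((1 + x) ^ α + (1 - x) ^ α) ^ (1 / α - 1) :=
      Real.rpow_pos_of_pos (psi_g_pos α (hsub hx)) _
    rcases hα with h | h
    · -- α < 1 : both factors negative
      have hc : α / (α - 1) < 0 := div_neg_of_pos_of_neg hα0 (by linarith [h.2])
      have hd : (1 + x) ^ (α - 1) < (1 - x) ^ (α - 1) :=
        Real.rpow_lt_rpow_of_neg h2 hab (by linarith [h.2])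
      exact mul_pos_of_neg_of_neg hc
        (mul_neg_of_pos_of_neg hG (by linarith))
    · -- 1 < α : both factors positive
      have h' := Set.mem_Ioi.mp h
      have hc : 0 < α / (α - 1) := div_pos hα0 (by linarith)
      have hd : (1 - x) ^ (α - 1) < (1 + x) ^ (α - 1) :=
        Real.rpow_lt_rpow h2.le hab (by linarith)
      exact mul_pos hc (mul_pos hG (by linarith))
  constructor
  · norm_num
  · norm_num [Real.zero_rpow hα0.ne']
    left
    rw [← Real.rpow_mul (by norm_num : (0:ℝ) ≤ 2), mul_inv_cancel₀ hα0.ne', Real.rpow_one]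
end

section
/- For α ∈ (0,1) ∪ (1,∞) and probability distributions P, Q with densities, the Arimoto divergence satisfies ψ_α(D_TV(P||Q)) ≤ D_{f_α}(P||Q) ≤ ψ_α(1)·D_TV(P||Q), where ψ_α(p) = (α/(α-1))·(((1+p)^α + (1−p)^α)^(1/α) − 2^(1/α)) and ψ_α(1) = (α/(α-1))·(2 − 2^(1/α)). -/
open Real MeasureTheory


lemma holder2 {p q : ℝ} (hpq : Real.HolderConjugate p q) {a b x y : ℝ}
    (ha : 0 ≤ a) (hb : 0 ≤ b) (hx : 0 ≤ x) (hy : 0 ≤ y) :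
    a * x + b * y ≤ (a ^ p + b ^ p) ^ (1/p) * (x ^ q + y ^ q) ^ (1/q) := by
  have := Real.inner_le_Lp_mul_Lq_of_nonneg (s := (Finset.univ : Finset (Fin 2)))
    (f := ![a, b]) (g := ![x, y]) hpq
    (by intro i _; fin_cases i <;> simpa) (by intro i _; fin_cases i <;> simpa)
  simpa [Fin.sum_univ_two] using this

lemma mul_rpow_sub_one {m α : ℝ} (hm : 0 ≤ m) (hα : α ≠ 0) :
    m * m ^ (α - 1) = m ^ α := by
  rcases hm.eq_or_lt with h | h
  · simp [← h, Real.zero_rpow hα]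
  · nth_rewrite 1 [← Real.rpow_one m]
    rw [← Real.rpow_add h]; ring_nf

lemma holder_gt {α : ℝ} (hα : 1 < α) {a b x y : ℝ}
    (ha : 0 ≤ a) (hb : 0 ≤ b) (hx : 0 ≤ x) (hy : 0 ≤ y) :
    a ^ (α-1) * x + b ^ (α-1) * y ≤ (a ^ α + b ^ α) ^ ((α-1)/α) * (x ^ α + y ^ α) ^ (1/α) := by
  have hne : α - 1 ≠ 0 := by linarith
  have hαne : α ≠ 0 := by linarith
  have hconj : Real.HolderConjugate (α/(α-1)) α := by
    rw [Real.holderConjugate_iff]; constructor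
    · rw [lt_div_iff₀ (by linarith)]; linarith
    · field_simp; ring
  have h := holder2 (a := a ^ (α-1)) (b := b ^ (α-1)) (x := x) (y := y) hconj
    (Real.rpow_nonneg ha _) (Real.rpow_nonneg hb _) hx hy
  have e1 : ∀ c : ℝ, 0 ≤ c → (c ^ (α-1)) ^ (α/(α-1)) = c ^ α := by
    intro c hc
    rw [← Real.rpow_mul hc]
    congr 1; field_simp
  rw [e1 a ha, e1 b hb, one_div_div] at h
  exact h

lemma tangent_lt {α : ℝ} (h0 : 0 < α) (h1 : α < 1) {a b x y : ℝ}
    (ha : 0 < a) (hb : 0 < b) (hx : 0 ≤ x) (hy : 0 ≤ y) :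
    (x ^ α + y ^ α) ^ (1/α) * (a ^ α + b ^ α) ^ ((α-1)/α)
      ≤ a ^ (α-1) * x + b ^ (α-1) * y := by
  have hαne : α ≠ 0 := ne_of_gt h0
  set u := a ^ (α-1) * x with hu
  set w := b ^ (α-1) * y with hw
  have hu0 : 0 ≤ u := by positivity
  have hw0 : 0 ≤ w := by positivity
  have hA : 0 < a ^ α + b ^ α := by positivity
  have hconj : Real.HolderConjugate (1/α) (1/(1-α)) := by
    rw [Real.holderConjugate_iff]; constructor
    · rw [lt_div_iff₀ h0]; linarith
    · rw [one_div, one_div, inv_inv, inv_inv]; ring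
  have key : x ^ α + y ^ α ≤ (u + w) ^ α * (a ^ α + b ^ α) ^ (1-α) := by
    have h := holder2 (a := u ^ α) (b := w ^ α) (x := (a ^ α) ^ (1-α)) (y := (b ^ α) ^ (1-α))
      hconj (Real.rpow_nonneg hu0 α) (Real.rpow_nonneg hw0 α)
      (Real.rpow_nonneg (Real.rpow_nonneg ha.le α) (1-α))
      (Real.rpow_nonneg (Real.rpow_nonneg hb.le α) (1-α))
    simp only [one_div_one_div] at h
    have i1 : ∀ z : ℝ, 0 ≤ z → (z ^ α) ^ (1/α) = z := fun z hz => by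
      rw [one_div, Real.rpow_rpow_inv hz hαne]
    have i2 : ∀ z : ℝ, 0 ≤ z → (z ^ (1-α)) ^ (1/(1-α)) = z := fun z hz => by
      rw [one_div, Real.rpow_rpow_inv hz (by linarith)]
    have e1 : ∀ c z : ℝ, 0 < c → 0 ≤ z →
        (c ^ (α-1) * z) ^ α * (c ^ α) ^ (1-α) = z ^ α := by
      intro c z hc hz
      rw [Real.mul_rpow (Real.rpow_nonneg hc.le _) hz, ← Real.rpow_mul hc.le,
        ← Real.rpow_mul hc.le]
      have h2 : c ^ ((α-1)*α) * z ^ α * c ^ (α*(1-α)) = c ^ ((α-1)*α) * c ^ (α*(1-α)) * z ^ α := by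
        ring
      rw [h2, ← Real.rpow_add hc]
      have h3 : (α-1)*α + α*(1-α) = 0 := by ring
      rw [h3, Real.rpow_zero, one_mul]
    rw [e1 a x ha hx, e1 b y hb hy, i1 u hu0, i1 w hw0,
      i2 _ (Real.rpow_nonneg ha.le α), i2 _ (Real.rpow_nonneg hb.le α)] at h
    exact h
  have key2 : (x ^ α + y ^ α) ^ (1/α) ≤ (u + w) * (a ^ α + b ^ α) ^ ((1-α)/α) := by
    have h := Real.rpow_le_rpow (by positivity) key (by positivity : (0:ℝ) ≤ 1/α)
    rwa [Real.mul_rpow (Real.rpow_nonneg (by positivity) _) (Real.rpow_nonneg hA.le _),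
      ← Real.rpow_mul (by positivity), mul_one_div, div_self hαne, Real.rpow_one,
      ← Real.rpow_mul hA.le, mul_one_div] at h
  calc (x ^ α + y ^ α) ^ (1/α) * (a ^ α + b ^ α) ^ ((α-1)/α)
      ≤ (u + w) * (a ^ α + b ^ α) ^ ((1-α)/α) * (a ^ α + b ^ α) ^ ((α-1)/α) := by
        apply mul_le_mul_of_nonneg_right key2 (Real.rpow_nonneg hA.le _)
    _ = u + w := by
        rw [mul_assoc, ← Real.rpow_add hA]
        have h3 : (1-α)/α + (α-1)/α = 0 := by ring
        rw [h3, Real.rpow_zero, mul_one]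


lemma rpow_one_div_of_mul_le {α S C : ℝ} (hαne : α ≠ 0) (hS : 0 < S) (hC : 0 ≤ C)
    (h : S ≤ C * S ^ ((α-1)/α)) : S ^ (1/α) ≤ C := by
  have hK : (0:ℝ) < S ^ ((α-1)/α) := Real.rpow_pos_of_pos hS _
  have : S / S ^ ((α-1)/α) ≤ C := by
    rw [div_le_iff₀ hK]; exact h
  calc S ^ (1/α) = S ^ (1 - (α-1)/α) := by congr 1; field_simp; ring
    _ = S ^ (1:ℝ) / S ^ ((α-1)/α) := Real.rpow_sub hS _ _
    _ = S / S ^ ((α-1)/α) := by rw [Real.rpow_one]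
    _ ≤ C := this

lemma le_rpow_one_div_of_mul_le {α S C : ℝ} (hαne : α ≠ 0) (hS : 0 < S)
    (h : C * S ^ ((α-1)/α) ≤ S) : C ≤ S ^ (1/α) := by
  have hK : (0:ℝ) < S ^ ((α-1)/α) := Real.rpow_pos_of_pos hS _
  have h2 : C ≤ S / S ^ ((α-1)/α) := by
    rw [le_div_iff₀ hK]; exact h
  calc C ≤ S / S ^ ((α-1)/α) := h2
    _ = S ^ (1:ℝ) / S ^ ((α-1)/α) := by rw [Real.rpow_one]
    _ = S ^ (1 - (α-1)/α) := (Real.rpow_sub hS _ _).symm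
    _ = S ^ (1/α) := by congr 1; field_simp; ring

lemma minkowski_gt {α m d : ℝ} (hα : 1 < α) (hm : 0 ≤ m) (hd : 0 ≤ d) :
    (m ^ α + (m + d) ^ α) ^ (1/α) ≤ 2 ^ (1/α) * m + d := by
  have hαne : α ≠ 0 := by linarith
  set M := m + d with hM
  have hMnn : 0 ≤ M := by positivity
  set S := m ^ α + M ^ α with hSdef
  have hS0 : 0 ≤ S := by positivity
  rcases hS0.eq_or_lt with h | hS
  · have hm0 : m ^ α = 0 := by
      have := Real.rpow_nonneg hm α
      have := Real.rpow_nonneg hMnn α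
      linarith [h.symm]
    have hM0 : M ^ α = 0 := by
      have := Real.rpow_nonneg hm α
      linarith [h.symm]
    have hm' : m = 0 := by
      have := (Real.rpow_eq_zero_iff_of_nonneg hm).1 hm0
      exact this.1
    have hM' : M = 0 := by
      have := (Real.rpow_eq_zero_iff_of_nonneg hMnn).1 hM0
      exact this.1
    have hd' : d = 0 := by rw [hM] at hM'; linarith
    rw [← h, hm', hd', Real.zero_rpow (by positivity : 1/α ≠ 0)]
    norm_num
  · have hne : α - 1 ≠ 0 := by linarith
    have key : S ≤ (2 ^ (1/α) * m + d) * S ^ ((α-1)/α) := by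
      have h1 : m * m ^ (α-1) + m * M ^ (α-1) ≤ 2 ^ (1/α) * m * S ^ ((α-1)/α) := by
        have hconj : Real.HolderConjugate α (α/(α-1)) := by
          rw [Real.holderConjugate_iff]; constructor
          · exact hα
          · field_simp; ring
        have h := holder2 (a := m) (b := m) (x := m ^ (α-1)) (y := M ^ (α-1)) hconj hm hm
          (Real.rpow_nonneg hm _) (Real.rpow_nonneg hMnn _)
        have e1 : ∀ c : ℝ, 0 ≤ c → (c ^ (α-1)) ^ (α/(α-1)) = c ^ α := by
          intro c hc
          rw [← Real.rpow_mul hc]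
          congr 1; field_simp
        rw [e1 m hm, e1 M hMnn, one_div_div] at h
        calc m * m ^ (α-1) + m * M ^ (α-1)
            ≤ (m ^ α + m ^ α) ^ (1/α) * (m ^ α + M ^ α) ^ ((α-1)/α) := h
          _ = 2 ^ (1/α) * m * S ^ ((α-1)/α) := by
              rw [← two_mul, Real.mul_rpow (by norm_num) (Real.rpow_nonneg hm _),
                ← Real.rpow_mul hm, mul_one_div, div_self hαne, Real.rpow_one]
      have h2 : d * M ^ (α-1) ≤ d * S ^ ((α-1)/α) := by
        apply mul_le_mul_of_nonneg_left _ hd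
        calc M ^ (α-1) = (M ^ α) ^ ((α-1)/α) := by
              rw [← Real.rpow_mul hMnn]; congr 1; field_simp
          _ ≤ S ^ ((α-1)/α) :=
              Real.rpow_le_rpow (Real.rpow_nonneg hMnn _)
                (le_add_of_nonneg_left (Real.rpow_nonneg hm _))
                (div_nonneg (by linarith) (by linarith))
      have hSdecomp : S = (m * m ^ (α-1) + m * M ^ (α-1)) + d * M ^ (α-1) := by
        rw [hSdef, ← mul_rpow_sub_one hm hαne, ← mul_rpow_sub_one hMnn hαne, hM]
        ring
      calc S = (m * m ^ (α-1) + m * M ^ (α-1)) + d * M ^ (α-1) := hSdecomp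
        _ ≤ 2 ^ (1/α) * m * S ^ ((α-1)/α) + d * S ^ ((α-1)/α) := add_le_add h1 h2
        _ = (2 ^ (1/α) * m + d) * S ^ ((α-1)/α) := by ring
    exact rpow_one_div_of_mul_le hαne hS (by positivity) key

lemma minkowski_lt {α m d : ℝ} (h0 : 0 < α) (h1 : α < 1) (hm : 0 ≤ m) (hd : 0 ≤ d) :
    2 ^ (1/α) * m + d ≤ (m ^ α + (m + d) ^ α) ^ (1/α) := by
  have hαne : α ≠ 0 := ne_of_gt h0
  rcases hm.eq_or_lt with h | hmpos
  · rw [← h, Real.zero_rpow hαne, mul_zero, zero_add, zero_add, one_div,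
      Real.rpow_rpow_inv hd hαne]
  · set M := m + d with hM
    have hMpos : 0 < M := by positivity
    set S := m ^ α + M ^ α with hSdef
    have hS : 0 < S := by positivity
    have t1 : 2 ^ (1/α) * m * S ^ ((α-1)/α) ≤ m ^ (α-1) * m + M ^ (α-1) * m := by
      have h := tangent_lt h0 h1 hmpos hMpos hm hm
      calc 2 ^ (1/α) * m * S ^ ((α-1)/α)
          = (m ^ α + m ^ α) ^ (1/α) * S ^ ((α-1)/α) := by
            rw [← two_mul, Real.mul_rpow (by norm_num) (Real.rpow_nonneg hm _),
              ← Real.rpow_mul hm, mul_one_div, div_self hαne, Real.rpow_one]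
        _ ≤ m ^ (α-1) * m + M ^ (α-1) * m := h
    have t2 : d * S ^ ((α-1)/α) ≤ M ^ (α-1) * d := by
      have h := tangent_lt h0 h1 hmpos hMpos (le_refl (0:ℝ)) hd
      rw [Real.zero_rpow hαne, zero_add, mul_zero, zero_add] at h
      calc d * S ^ ((α-1)/α) = (d ^ α) ^ (1/α) * S ^ ((α-1)/α) := by
            rw [one_div, Real.rpow_rpow_inv hd hαne]
        _ ≤ M ^ (α-1) * d := h
    have key : (2 ^ (1/α) * m + d) * S ^ ((α-1)/α) ≤ S := by
      have hSd : S = (m ^ (α-1) * m + M ^ (α-1) * m) + M ^ (α-1) * d := by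
        rw [hSdef, ← mul_rpow_sub_one hm hαne, ← mul_rpow_sub_one hMpos.le hαne]
        rw [hM]; ring
      calc (2 ^ (1/α) * m + d) * S ^ ((α-1)/α)
          = 2 ^ (1/α) * m * S ^ ((α-1)/α) + d * S ^ ((α-1)/α) := by ring
        _ ≤ (m ^ (α-1) * m + M ^ (α-1) * m) + M ^ (α-1) * d := add_le_add t1 t2
        _ = S := hSd.symm
    exact le_rpow_one_div_of_mul_le hαne hS key

theorem arimoto_tv_sandwich {X : Type*} [MeasurableSpace X] (μ : Measure X)
    (α : ℝ) (hα : α ∈ Set.Ioo (0:ℝ) 1 ∪ Set.Ioi 1)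
    (p q : X → ℝ) (hpm : Measurable p) (hqm : Measurable q)
    (hp : ∀ x, 0 ≤ p x) (hq : ∀ x, 0 ≤ q x)
    (hpi : Integrable p μ) (hqi : Integrable q μ)
    (hi : Integrable (fun x => (p x ^ α + q x ^ α) ^ (1 / α)) μ)
    (hp1 : ∫ x, p x ∂μ = 1) (hq1 : ∫ x, q x ∂μ = 1) :
    α / (α - 1) *
        (((1 + (1 / 2) * ∫ x, |p x - q x| ∂μ) ^ α +
          (1 - (1 / 2) * ∫ x, |p x - q x| ∂μ) ^ α) ^ (1 / α) - 2 ^ (1 / α)) ≤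
      α / (α - 1) * ((∫ x, (p x ^ α + q x ^ α) ^ (1 / α) ∂μ) - 2 ^ (1 / α)) ∧
    α / (α - 1) * ((∫ x, (p x ^ α + q x ^ α) ^ (1 / α) ∂μ) - 2 ^ (1 / α)) ≤
      (α / (α - 1) * (2 - 2 ^ (1 / α))) * ((1 / 2) * ∫ x, |p x - q x| ∂μ) := by
  have hαpos : 0 < α := by rcases hα with h | h; exacts [h.1, lt_trans one_pos h]
  have hαne : α ≠ 0 := ne_of_gt hαpos
  set k := α / (α - 1) with hk
  set T := ∫ x, |p x - q x| ∂μ with hTdef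
  set v := (1/2 : ℝ) * T with hvdef
  set c := (2:ℝ) ^ (1/α) with hcdef
  set I := ∫ x, (p x ^ α + q x ^ α) ^ (1/α) ∂μ with hIdef
  have habs : Integrable (fun x => |p x - q x|) μ := (hpi.sub hqi).abs
  have hpq : Integrable (fun x => p x + q x) μ := hpi.add hqi
  have hsum : ∫ x, (p x + q x) ∂μ = 2 := by
    rw [integral_add hpi hqi, hp1, hq1]; norm_num
  have hT0 : 0 ≤ T := integral_nonneg fun x => abs_nonneg _
  have hT2 : T ≤ 2 := by
    have hle : ∫ x, |p x - q x| ∂μ ≤ ∫ x, (p x + q x) ∂μ := by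
      apply integral_mono habs hpq
      intro x
      show |p x - q x| ≤ p x + q x
      rw [abs_sub_le_iff]
      exact ⟨by linarith [hq x], by linarith [hp x]⟩
    rw [hsum] at hle
    exact hle
  have hv0 : 0 ≤ v := by rw [hvdef]; linarith
  have hv1 : v ≤ 1 := by rw [hvdef]; linarith
  set mx := fun x => max (p x) (q x) with hmx
  set mn := fun x => min (p x) (q x) with hmn
  have hmx0 : ∀ x, 0 ≤ mx x := fun x => le_trans (hp x) (le_max_left _ _)
  have hmn0 : ∀ x, 0 ≤ mn x := fun x => le_min (hp x) (hq x)
  have hmxi : Integrable mx μ := hpi.sup hqi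
  have hmni : Integrable mn μ := hpi.inf hqi
  have hmax_eq : ∀ x, mx x = (p x + q x + |p x - q x|)/2 := by
    intro x
    simp only [hmx]
    rcases le_total (p x) (q x) with h | h
    · rw [max_eq_right h, abs_of_nonpos (by linarith)]; ring
    · rw [max_eq_left h, abs_of_nonneg (by linarith)]; ring
  have hmin_eq : ∀ x, mn x = (p x + q x - |p x - q x|)/2 := by
    intro x
    simp only [hmn]
    rcases le_total (p x) (q x) with h | h
    · rw [min_eq_left h, abs_of_nonpos (by linarith)]; ring
    · rw [min_eq_right h, abs_of_nonneg (by linarith)]; ring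
  have hImax : ∫ x, mx x ∂μ = 1 + v := by
    have h1 : ∫ x, mx x ∂μ = ∫ x, (p x + q x + |p x - q x|)/2 ∂μ := by
      apply integral_congr_ae
      filter_upwards with x using hmax_eq x
    rw [h1, integral_div, integral_add hpq habs, hsum, ← hTdef, hvdef]
    ring
  have hImin : ∫ x, mn x ∂μ = 1 - v := by
    have h1 : ∫ x, mn x ∂μ = ∫ x, (p x + q x - |p x - q x|)/2 ∂μ := by
      apply integral_congr_ae
      filter_upwards with x using hmin_eq x
    rw [h1, integral_div, integral_sub hpq habs, hsum, ← hTdef, hvdef]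
    ring
  have hpow_eq : ∀ x, mx x ^ α + mn x ^ α = p x ^ α + q x ^ α := by
    intro x
    simp only [hmx, hmn]
    rcases le_total (p x) (q x) with h | h
    · rw [max_eq_right h, min_eq_left h]; exact add_comm _ _
    · rw [max_eq_left h, min_eq_right h]
  have hdiff : ∀ x, mn x + |p x - q x| = mx x := by
    intro x
    have := hmax_eq x
    have := hmin_eq x
    linarith
  rcases hα with ⟨h0, h1⟩ | hgt
  case inr =>
    -- α > 1
    have hgt : 1 < α := hgt
    have hkpos : 0 < k := by rw [hk]; exact div_pos hαpos (by linarith)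
    -- upper bound
    have hpt : ∀ x, (p x ^ α + q x ^ α) ^ (1/α) ≤ c * mn x + |p x - q x| := by
      intro x
      have h := minkowski_gt hgt (hmn0 x) (abs_nonneg (p x - q x))
      rw [hdiff x, add_comm (mn x ^ α), hpow_eq x] at h
      exact h
    have hR : Integrable (fun x => c * mn x + |p x - q x|) μ := (hmni.const_mul c).add habs
    have hIub : I ≤ c * (1 - v) + T := by
      have h := integral_mono hi hR hpt
      rw [integral_add (hmni.const_mul c) habs, integral_const_mul, hImin, ← hTdef] at h
      exact h
    -- lower bound
    have hb0 : (0:ℝ) ≤ 1 - v := by linarith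
    have ha0 : (0:ℝ) ≤ 1 + v := by linarith
    set A := (1 + v) ^ α + (1 - v) ^ α with hAdef
    have hApos : 0 < A := by
      have := Real.rpow_pos_of_pos (show (0:ℝ) < 1 + v by linarith) α
      have := Real.rpow_nonneg hb0 α
      rw [hAdef]; linarith
    have hpt2 : ∀ x, (1+v)^(α-1) * mx x + (1-v)^(α-1) * mn x
        ≤ A ^ ((α-1)/α) * (p x ^ α + q x ^ α) ^ (1/α) := by
      intro x
      have h := holder_gt hgt ha0 hb0 (hmx0 x) (hmn0 x)
      rwa [hpow_eq x] at h
    have hL : Integrable (fun x => (1+v)^(α-1) * mx x + (1-v)^(α-1) * mn x) μ :=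
      (hmxi.const_mul _).add (hmni.const_mul _)
    have hint : A ≤ A ^ ((α-1)/α) * I := by
      have h := integral_mono hL (hi.const_mul _) hpt2
      rw [integral_add (hmxi.const_mul _) (hmni.const_mul _), integral_const_mul,
        integral_const_mul, hImax, hImin, integral_const_mul, ← hIdef] at h
      have hAeq : (1+v)^(α-1) * (1+v) + (1-v)^(α-1) * (1-v) = A := by
        rw [hAdef, mul_comm ((1+v:ℝ)^(α-1)), mul_comm ((1-v:ℝ)^(α-1)),
          mul_rpow_sub_one ha0 hαne, mul_rpow_sub_one hb0 hαne]
      rwa [hAeq] at h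
    have hAle : A ^ (1/α) ≤ I := by
      have hI0 : 0 ≤ I := integral_nonneg fun x => Real.rpow_nonneg
        (add_nonneg (Real.rpow_nonneg (hp x) α) (Real.rpow_nonneg (hq x) α)) _
      refine rpow_one_div_of_mul_le hαne hApos hI0 ?_
      rw [mul_comm] at hint
      exact hint
    constructor
    · exact mul_le_mul_of_nonneg_left (by linarith) hkpos.le
    · have hstep : I - c ≤ (2 - c) * v := by nlinarith [hIub, hvdef]
      calc k * (I - c) ≤ k * ((2 - c) * v) := mul_le_mul_of_nonneg_left hstep hkpos.le
        _ = (k * (2 - c)) * v := by ring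
  case inl =>
    -- 0 < α < 1
    have hkneg : k < 0 := by
      rw [hk]; exact div_neg_of_pos_of_neg hαpos (by linarith)
    -- upper bound
    have hpt : ∀ x, c * mn x + |p x - q x| ≤ (p x ^ α + q x ^ α) ^ (1/α) := by
      intro x
      have h := minkowski_lt h0 h1 (hmn0 x) (abs_nonneg (p x - q x))
      rw [hdiff x, add_comm (mn x ^ α), hpow_eq x] at h
      exact h
    have hR : Integrable (fun x => c * mn x + |p x - q x|) μ := (hmni.const_mul c).add habs
    have hIlb : c * (1 - v) + T ≤ I := by
      have h := integral_mono hR hi hpt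
      rw [integral_add (hmni.const_mul c) habs, integral_const_mul, hImin, ← hTdef] at h
      exact h
    have hupper : k * (I - c) ≤ (k * (2 - c)) * v := by
      have hstep : (2 - c) * v ≤ I - c := by nlinarith [hIlb]
      calc k * (I - c) ≤ k * ((2 - c) * v) := mul_le_mul_of_nonpos_left hstep hkneg.le
        _ = (k * (2 - c)) * v := by ring
    set A := (1 + v) ^ α + (1 - v) ^ α with hAdef
    rcases lt_or_eq_of_le hv1 with hvlt | hveq
    · -- v < 1
      have ha : (0:ℝ) < 1 + v := by linarith
      have hb : (0:ℝ) < 1 - v := by linarith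
      have hApos : 0 < A := by
        have := Real.rpow_pos_of_pos ha α
        have := Real.rpow_nonneg hb.le α
        rw [hAdef]; linarith
      have hpt2 : ∀ x, (p x ^ α + q x ^ α) ^ (1/α) * A ^ ((α-1)/α)
          ≤ (1+v)^(α-1) * mx x + (1-v)^(α-1) * mn x := by
        intro x
        have h := tangent_lt h0 h1 ha hb (hmx0 x) (hmn0 x)
        rwa [hpow_eq x] at h
      have hL : Integrable (fun x => (1+v)^(α-1) * mx x + (1-v)^(α-1) * mn x) μ :=
        (hmxi.const_mul _).add (hmni.const_mul _)
      have hint : I * A ^ ((α-1)/α) ≤ A := by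
        have h := integral_mono (hi.mul_const _) hL hpt2
        rw [integral_add (hmxi.const_mul _) (hmni.const_mul _), integral_const_mul,
          integral_const_mul, hImax, hImin, integral_mul_const, ← hIdef] at h
        have hAeq : (1+v)^(α-1) * (1+v) + (1-v)^(α-1) * (1-v) = A := by
          rw [hAdef, mul_comm ((1+v:ℝ)^(α-1)), mul_comm ((1-v:ℝ)^(α-1)),
            mul_rpow_sub_one ha.le hαne, mul_rpow_sub_one hb.le hαne]
        rwa [hAeq] at h
      have hAle : I ≤ A ^ (1/α) := le_rpow_one_div_of_mul_le hαne hApos hint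
      exact ⟨mul_le_mul_of_nonpos_left (by linarith) hkneg.le, hupper⟩
    · -- v = 1
      have hminz : ∫ x, mn x ∂μ = 0 := by rw [hImin, hveq]; ring
      have hmn_ae : mn =ᵐ[μ] 0 := by
        rw [← integral_eq_zero_iff_of_nonneg (fun x => hmn0 x) hmni] at *
        exact hminz
      have hIeq : I = 2 := by
        have hcong : (fun x => (p x ^ α + q x ^ α) ^ (1/α)) =ᵐ[μ] (fun x => p x + q x) := by
          filter_upwards [hmn_ae] with x hx
          simp only [hmn, Pi.zero_apply] at hx
          rcases le_total (p x) (q x) with h' | h'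
          · have hp0 : p x = 0 := by rw [min_eq_left h'] at hx; exact hx
            rw [hp0, Real.zero_rpow hαne, zero_add, one_div,
              Real.rpow_rpow_inv (hq x) hαne, zero_add]
          · have hq0 : q x = 0 := by rw [min_eq_right h'] at hx; exact hx
            rw [hq0, Real.zero_rpow hαne, add_zero, one_div,
              Real.rpow_rpow_inv (hp x) hαne, add_zero]
        rw [hIdef, integral_congr_ae hcong, hsum]
      have hAeq2 : A = 2 ^ α := by
        rw [hAdef, hveq]
        norm_num [Real.zero_rpow hαne]
      have hA1 : A ^ (1/α) = 2 := by
        rw [hAeq2, one_div, Real.rpow_rpow_inv (by norm_num) hαne]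
      constructor
      · rw [hIeq, hA1]
      · rw [hIeq, hveq, mul_one]
end
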